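/- arXiv:1407.2199 — 3 statements merged into one kernel-verified Lean document; each statement's English description precedes it below -/
import Mathlib

section
/- Let (G,p) be an r-dimensional bar framework on n nodes in ℝ^r, with r ≤ n−2. If there exists a positive semidefinite stress matrix Ω of (G,p) of rank n−r−1, and the configuration p is in general position in ℝ^r, then (G,p) is universally rigid. -/
open Matrix

/-- A configuration `p` in `ℝ^r` is `r`-dimensional if its points affinely span `ℝ^r`. -/
def IsRDimensional {n r : ℕ} (p : Fin n → EuclideanSpace ℝ (Fin r)) : Prop :=
  affineSpan ℝ (Set.range p) = ⊤

/-- A configuration is in general position in `ℝ^r` if every `r+1` of its points are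
affinely independent. -/
def InGeneralPosition {n r : ℕ} (p : Fin n → EuclideanSpace ℝ (Fin r)) : Prop :=
  ∀ s : Finset (Fin n), s.card = r + 1 → AffineIndependent ℝ (fun i : s => p i)

/-- `(G, q)` is equivalent to `(G, p)`: corresponding edge lengths agree. -/
def FrameworkEquiv {n r r' : ℕ} (G : SimpleGraph (Fin n))
    (p : Fin n → EuclideanSpace ℝ (Fin r)) (q : Fin n → EuclideanSpace ℝ (Fin r')) : Prop :=
  ∀ i j : Fin n, G.Adj i j → ‖q i - q j‖ = ‖p i - p j‖

/-- Two configurations are congruent: all pairwise distances agree. -/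
def ConfigCongruent {n r r' : ℕ} (p : Fin n → EuclideanSpace ℝ (Fin r))
    (q : Fin n → EuclideanSpace ℝ (Fin r')) : Prop :=
  ∀ i j : Fin n, ‖q i - q j‖ = ‖p i - p j‖

/-- `(G, p)` is universally rigid. -/
def UniversallyRigid {n r : ℕ} (G : SimpleGraph (Fin n))
    (p : Fin n → EuclideanSpace ℝ (Fin r)) : Prop :=
  ∀ r' : ℕ, 1 ≤ r' → r' ≤ n - 1 → ∀ q : Fin n → EuclideanSpace ℝ (Fin r'),
    IsRDimensional q → FrameworkEquiv G p q → ConfigCongruent p q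

/-- `G` is `k`-vertex connected. -/
def IsKConnected {n : ℕ} (G : SimpleGraph (Fin n)) (k : ℕ) : Prop :=
  (n = k + 1 ∧ G = ⊤) ∨
  (k + 2 ≤ n ∧ ∀ S : Finset (Fin n), S.card = k - 1 →
    (G.induce ((↑S : Set (Fin n))ᶜ)).Connected)

/-- The configuration matrix of `p`. -/
def configMatrix {n r : ℕ} (p : Fin n → EuclideanSpace ℝ (Fin r)) : Matrix (Fin n) (Fin r) ℝ :=
  Matrix.of fun i k => p i k

/-- `Ω` is a stress matrix of `(G, p)`. -/
def IsStressMatrix {n r : ℕ} (G : SimpleGraph (Fin n)) (p : Fin n → EuclideanSpace ℝ (Fin r))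
    (Ω : Matrix (Fin n) (Fin n) ℝ) : Prop :=
  Ω.IsSymm ∧ (∀ i j : Fin n, i ≠ j → ¬ G.Adj i j → Ω i j = 0) ∧
  Ω * configMatrix p = 0 ∧ Ω *ᵥ (fun _ => (1 : ℝ)) = 0

/-- The matrix `[Pᵀ; eᵀ]` obtained by stacking `Pᵀ` on top of the all-ones row `eᵀ`. -/
def galeStack {n r : ℕ} (p : Fin n → EuclideanSpace ℝ (Fin r)) :
    Matrix (Fin r ⊕ Unit) (Fin n) ℝ :=
  Matrix.fromRows (Matrix.of fun k i => p i k) (Matrix.of fun _ _ => (1 : ℝ))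

/-- `Z` is a Gale matrix of `p`: its columns form a basis of the null space of `[Pᵀ; eᵀ]`. -/
def IsGaleMatrix {n r : ℕ} (p : Fin n → EuclideanSpace ℝ (Fin r))
    (Z : Matrix (Fin n) (Fin (n - r - 1)) ℝ) : Prop :=
  LinearIndependent ℝ (fun j : Fin (n - r - 1) => fun i => Z i j) ∧
  Submodule.span ℝ (Set.range (fun j : Fin (n - r - 1) => fun i => Z i j)) =
    LinearMap.ker (galeStack p).mulVecLin

section AlfakihYeAux

open Finset

/-- An affine functional vanishing on a family whose affine span is everything is zero. -/
lemma AY.affine_functional_zero {r : ℕ} {ι : Type*} [Nonempty ι]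
    (p : ι → EuclideanSpace ℝ (Fin r))
    (hspan : affineSpan ℝ (Set.range p) = ⊤) (u : Fin r → ℝ) (t : ℝ)
    (h : ∀ i, (∑ m, u m * p i m) + t = 0) : u = 0 ∧ t = 0 := by
  classical
  let F : EuclideanSpace ℝ (Fin r) →ₗ[ℝ] ℝ :=
    { toFun := fun x => ∑ m, u m * x m
      map_add' := by
        intro x y
        simp [PiLp.add_apply, mul_add, Finset.sum_add_distrib]
      map_smul' := by
        intro c x
        simp [PiLp.smul_apply, Finset.mul_sum]
        ring_nf
        apply Finset.sum_congr rfl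
        intro m _
        ring }
  have hvs : vectorSpan ℝ (Set.range p) = ⊤ :=
    AffineSubspace.vectorSpan_eq_top_of_affineSpan_eq_top ℝ _ _ hspan
  have hker : vectorSpan ℝ (Set.range p) ≤ LinearMap.ker F := by
    rw [vectorSpan_def]
    apply Submodule.span_le.mpr
    rintro v hv
    obtain ⟨x, ⟨i, rfl⟩, y, ⟨j, rfl⟩, rfl⟩ := hv
    have : F (p i -ᵥ p j) = 0 := by
      have hi := h i
      have hj := h j
      have : F (p i -ᵥ p j) = (∑ m, u m * p i m) - (∑ m, u m * p j m) := by
        show (∑ m, u m * (p i - p j) m) = _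
        rw [← Finset.sum_sub_distrib]
        apply Finset.sum_congr rfl
        intro m _
        have : (p i - p j) m = p i m - p j m := rfl
        rw [this]; ring
      rw [this]
      linarith
    exact this
  have hF : F = 0 := by
    apply LinearMap.ker_eq_top.mp
    exact top_unique (hvs ▸ hker)
  have hu : u = 0 := by
    funext m
    have := congrFun (congrArg DFunLike.coe hF) (EuclideanSpace.single m 1)
    simp only [LinearMap.zero_apply] at this
    have h2 : (∑ l, u l * (EuclideanSpace.single m (1:ℝ)) l) = u m := by
      rw [Finset.sum_eq_single m]
      · simp [EuclideanSpace.single_apply]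
      · intro l _ hl
        simp [EuclideanSpace.single_apply, hl]
      · simp
    rw [show F (EuclideanSpace.single m 1) = ∑ l, u l * (EuclideanSpace.single m (1:ℝ)) l from rfl] at this
    rw [h2] at this
    exact this
  refine ⟨hu, ?_⟩
  obtain ⟨i⟩ := (inferInstance : Nonempty ι)
  have := h i
  rw [hu] at this
  simpa using this

lemma AY.vanish_on_genpos {n r : ℕ} {p : Fin n → EuclideanSpace ℝ (Fin r)}
    (hgen : InGeneralPosition p) {s : Finset (Fin n)} (hcard : s.card = r + 1)
    {u : Fin r → ℝ} {t : ℝ} (h : ∀ i ∈ s, (∑ m, u m * p i m) + t = 0) : u = 0 ∧ t = 0 := by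
  classical
  have hind := hgen s hcard
  have hne : Nonempty s := by
    rw [Finset.nonempty_coe_sort]
    exact Finset.card_pos.mp (by omega)
  have hspan : affineSpan ℝ (Set.range (fun i : s => p i)) = ⊤ := by
    rw [hind.affineSpan_eq_top_iff_card_eq_finrank_add_one]
    simp [finrank_euclideanSpace_fin, hcard]
  exact AY.affine_functional_zero (fun i : s => p i) hspan u t (fun i => h i i.2)

lemma AY.weights_zero_of_genpos {n r : ℕ} {p : Fin n → EuclideanSpace ℝ (Fin r)}
    (hgen : InGeneralPosition p) {s : Finset (Fin n)} (hcard : s.card = r + 1)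
    (w : Fin n → ℝ) (hsupp : ∀ j, j ∉ s → w j = 0) (hsum : ∑ j, w j = 0)
    (hcomb : ∀ m, ∑ j, w j * p j m = 0) : w = 0 := by
  classical
  have hind := hgen s hcard
  have hsum' : ∑ i : s, w i = 0 := by
    rw [Finset.sum_coe_sort s (fun j => w j)]
    rw [← hsum]
    exact Finset.sum_subset (Finset.subset_univ s) (fun x _ hx => hsupp x hx)
  have hcomb' : ∑ i : s, w i • p i = (0 : EuclideanSpace ℝ (Fin r)) := by
    ext m
    have h1 : (∑ i : s, w i • p i) m = ∑ i : s, w i * p i m := by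
      rw [WithLp.ofLp_sum, Finset.sum_apply]
      apply Finset.sum_congr rfl
      intro i _
      rfl
    rw [h1]
    rw [Finset.sum_coe_sort s (fun j => w j * p j m)]
    rw [show (0 : EuclideanSpace ℝ (Fin r)) m = 0 from rfl]
    rw [← hcomb m]
    exact Finset.sum_subset (Finset.subset_univ s) (fun x _ hx => by rw [hsupp x hx, zero_mul])
  funext j
  by_cases hj : j ∈ s
  · exact affineIndependent_iff.mp hind Finset.univ (fun i : s => w i)
      (by simpa using hsum') (by simpa using hcomb') ⟨j, hj⟩ (Finset.mem_univ _)
  · exact hsupp j hj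

lemma AY.energy_identity {n d : ℕ} (Ω : Matrix (Fin n) (Fin n) ℝ)
    (hrow : ∀ i, ∑ j, Ω i j = 0) (hcol : ∀ j, ∑ i, Ω i j = 0)
    (y : Fin n → Fin d → ℝ) :
    ∑ i, ∑ j, Ω i j * (∑ k, (y i k - y j k) ^ 2)
      = -2 * ∑ i, ∑ j, Ω i j * (∑ k, y i k * y j k) := by
  have expand : ∀ i j, Ω i j * (∑ k, (y i k - y j k) ^ 2)
      = Ω i j * (∑ k, y i k ^ 2) + Ω i j * (∑ k, y j k ^ 2)
        - 2 * (Ω i j * (∑ k, y i k * y j k)) := by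
    intro i j
    have h : (∑ k, (y i k - y j k) ^ 2)
        = (∑ k, y i k ^ 2) + (∑ k, y j k ^ 2) - 2 * (∑ k, y i k * y j k) := by
      rw [Finset.mul_sum, ← Finset.sum_add_distrib, ← Finset.sum_sub_distrib]
      exact Finset.sum_congr rfl fun k _ => by ring
    rw [h]; ring
  simp only [expand]
  have hsplit : ∀ i, ∑ j, (Ω i j * (∑ k, y i k ^ 2) + Ω i j * (∑ k, y j k ^ 2)
        - 2 * (Ω i j * (∑ k, y i k * y j k)))
      = (∑ j, Ω i j * (∑ k, y i k ^ 2)) + (∑ j, Ω i j * (∑ k, y j k ^ 2))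
        - 2 * ∑ j, Ω i j * (∑ k, y i k * y j k) := by
    intro i
    rw [Finset.mul_sum, ← Finset.sum_add_distrib, ← Finset.sum_sub_distrib]
  simp only [hsplit]
  have h1 : ∀ i, (∑ j, Ω i j * (∑ k, y i k ^ 2)) = 0 := by
    intro i
    rw [← Finset.sum_mul, hrow i, zero_mul]
  simp only [h1, zero_add]
  rw [Finset.sum_sub_distrib]
  have h2 : ∑ i, ∑ j, Ω i j * (∑ k, y j k ^ 2) = 0 := by
    rw [Finset.sum_comm]
    apply Finset.sum_eq_zero
    intro j _
    rw [← Finset.sum_mul, hcol j, zero_mul]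
  rw [h2, zero_sub, ← Finset.mul_sum]
  ring

lemma AY.norm_sq_euclidean {d : ℕ} (x : EuclideanSpace ℝ (Fin d)) :
    ‖x‖ ^ 2 = ∑ k, x k ^ 2 := by
  rw [EuclideanSpace.norm_eq, Real.sq_sqrt (by positivity)]
  exact Finset.sum_congr rfl fun k _ => by rw [Real.norm_eq_abs, sq_abs]

lemma AY.sum_swap3 {α β γ : Type*} [Fintype α] [Fintype β] [Fintype γ] (f : α → β → γ → ℝ) :
    ∑ x, ∑ y, ∑ z, f x y z = ∑ y, ∑ z, ∑ x, f x y z := by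
  rw [Finset.sum_comm]
  exact Finset.sum_congr rfl fun y _ => Finset.sum_comm

lemma AY.stress_quadric {n r : ℕ} (Ω : Matrix (Fin n) (Fin n) ℝ)
    (p : Fin n → EuclideanSpace ℝ (Fin r)) (Φ : Fin r → Fin r → ℝ)
    (hrow : ∀ i, ∑ j, Ω i j = 0) (hP0 : ∀ i m, ∑ j, Ω i j * p j m = 0)
    (hzero : ∀ i j, Ω i j ≠ 0 →
      ∑ m, ∑ l, (p i m - p j m) * ((p i l - p j l) * Φ m l) = 0)
    (i : Fin n) :
    ∑ j, Ω i j * (∑ m, ∑ l, p j m * (p j l * Φ m l)) = 0 := by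
  have hE : ∑ j, Ω i j * (∑ m, ∑ l, (p i m - p j m) * ((p i l - p j l) * Φ m l)) = 0 := by
    apply Finset.sum_eq_zero
    intro j _
    by_cases h : Ω i j = 0
    · rw [h, zero_mul]
    · rw [hzero i j h, mul_zero]
  have expand : ∀ j, Ω i j * (∑ m, ∑ l, (p i m - p j m) * ((p i l - p j l) * Φ m l))
      = ∑ m, ∑ l, Ω i j * ((p i m - p j m) * ((p i l - p j l) * Φ m l)) := by
    intro j
    rw [Finset.mul_sum]
    exact Finset.sum_congr rfl fun m _ => Finset.mul_sum _ _ _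
  have expand' : ∀ j, Ω i j * (∑ m, ∑ l, p j m * (p j l * Φ m l))
      = ∑ m, ∑ l, Ω i j * (p j m * (p j l * Φ m l)) := by
    intro j
    rw [Finset.mul_sum]
    exact Finset.sum_congr rfl fun m _ => Finset.mul_sum _ _ _
  simp only [expand] at hE
  simp only [expand']
  rw [AY.sum_swap3 (fun j m l => Ω i j * (p j m * (p j l * Φ m l)))]
  rw [AY.sum_swap3 (fun j m l => Ω i j * ((p i m - p j m) * ((p i l - p j l) * Φ m l)))] at hE
  have key : ∀ m l, ∑ j, Ω i j * ((p i m - p j m) * ((p i l - p j l) * Φ m l))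
      = (p i m * (p i l * Φ m l)) * (∑ j, Ω i j)
        - (p i m * Φ m l) * (∑ j, Ω i j * p j l)
        - (p i l * Φ m l) * (∑ j, Ω i j * p j m)
        + ∑ j, Ω i j * (p j m * (p j l * Φ m l)) := by
    intro m l
    rw [Finset.mul_sum, Finset.mul_sum, Finset.mul_sum]
    rw [← Finset.sum_sub_distrib, ← Finset.sum_sub_distrib, ← Finset.sum_add_distrib]
    apply Finset.sum_congr rfl
    intro j _
    ring
  simp only [key, hrow, hP0, mul_zero, sub_zero, zero_add] at hE
  exact hE

lemma AY.triple_to_quadform {n d : ℕ} (Ω : Matrix (Fin n) (Fin n) ℝ) (y : Fin n → Fin d → ℝ) :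
    ∑ i, ∑ j, Ω i j * (∑ k, y i k * y j k)
      = ∑ k, (fun i => y i k) ⬝ᵥ (Ω *ᵥ (fun i => y i k)) := by
  have h1 : ∀ i j, Ω i j * (∑ k, y i k * y j k) = ∑ k, Ω i j * (y i k * y j k) :=
    fun i j => Finset.mul_sum _ _ _
  simp only [h1]
  rw [← AY.sum_swap3 (fun k (i : Fin n) (j : Fin n) => Ω i j * (y i k * y j k))]
  apply Finset.sum_congr rfl
  intro k _
  simp only [dotProduct, Matrix.mulVec, Finset.mul_sum]
  apply Finset.sum_congr rfl
  intro i _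
  apply Finset.sum_congr rfl
  intro j _
  ring

lemma AY.quad_diff {n r r' : ℕ} (p : Fin n → EuclideanSpace ℝ (Fin r))
    (q : Fin n → EuclideanSpace ℝ (Fin r'))
    (A : Fin r' → Fin r → ℝ) (b : Fin r' → ℝ)
    (hA : ∀ k i, q i k = (∑ m, A k m * p i m) + b k)
    (Φ : Fin r → Fin r → ℝ)
    (hΦ : ∀ m l, Φ m l = (∑ k, A k m * A k l) - (if m = l then 1 else 0))
    (i j : Fin n) :
    ∑ k, (q i k - q j k) ^ 2
      = (∑ m, (p i m - p j m) ^ 2)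
        + ∑ m, ∑ l, (p i m - p j m) * ((p i l - p j l) * Φ m l) := by
  have hstep : ∀ k, q i k - q j k = ∑ m, A k m * (p i m - p j m) := by
    intro k
    have h : ∑ m, A k m * (p i m - p j m) = (∑ m, A k m * p i m) - ∑ m, A k m * p j m := by
      rw [← Finset.sum_sub_distrib]; exact Finset.sum_congr rfl fun m _ => mul_sub _ _ _
    rw [hA k i, hA k j, h]; ring
  simp only [hstep]
  have hsq : ∀ k, (∑ m, A k m * (p i m - p j m)) ^ 2
      = ∑ m, ∑ l, (A k m * (p i m - p j m)) * (A k l * (p i l - p j l)) := by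
    intro k
    rw [sq, Finset.sum_mul_sum]
  simp only [hsq]
  rw [AY.sum_swap3 (fun k m l => (A k m * (p i m - p j m)) * (A k l * (p i l - p j l)))]
  have hL : ∀ m l, ∑ k, (A k m * (p i m - p j m)) * (A k l * (p i l - p j l))
      = (p i m - p j m) * ((p i l - p j l) * (∑ k, A k m * A k l)) := by
    intro m l
    have h : (p i m - p j m) * ((p i l - p j l) * (∑ k, A k m * A k l))
        = ∑ k, (p i m - p j m) * ((p i l - p j l) * (A k m * A k l)) := by
      rw [Finset.mul_sum, Finset.mul_sum]
    rw [h]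
    exact Finset.sum_congr rfl fun k _ => by ring
  simp only [hL, hΦ]
  have hsplit : ∀ m l, (p i m - p j m) * ((p i l - p j l) *
        ((∑ k, A k m * A k l) - (if m = l then (1:ℝ) else 0)))
      = (p i m - p j m) * ((p i l - p j l) * (∑ k, A k m * A k l))
        - (p i m - p j m) * ((p i l - p j l) * (if m = l then (1:ℝ) else 0)) := by
    intro m l; ring
  simp only [hsplit, Finset.sum_sub_distrib]
  have hdiag : ∀ m, ∑ l, (p i m - p j m) * ((p i l - p j l) * (if m = l then (1:ℝ) else 0))
      = (p i m - p j m) ^ 2 := by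
    intro m
    rw [Finset.sum_eq_single m]
    · simp [sq]
    · intro l _ hlm
      simp [show ¬ m = l from fun h => hlm h.symm]
    · simp
  simp only [hdiag]
  ring

end AlfakihYeAux

/-- **Alfakih–Ye.** If an `r`-dimensional framework `(G, p)` on `n` nodes, `r ≤ n - 2`, admits a
positive semidefinite stress matrix `Ω` of rank `n - r - 1` and `p` is in general position,
then `(G, p)` is universally rigid. -/
theorem universally_rigid_of_psd_stress_matrix
    (n r : ℕ) (hrn : r + 2 ≤ n) (G : SimpleGraph (Fin n))
    (p : Fin n → EuclideanSpace ℝ (Fin r)) (hdim : IsRDimensional p)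
    (Ω : Matrix (Fin n) (Fin n) ℝ)
    (hΩ : IsStressMatrix G p Ω) (hpsd : Ω.PosSemidef) (hrank : Ω.rank = n - r - 1)
    (hgen : InGeneralPosition p) :
    UniversallyRigid G p := by
  classical
  intro r' _ _ q _ hequiv
  have hn0 : 0 < n := by omega
  have hne : Nonempty (Fin n) := ⟨⟨0, hn0⟩⟩
  -- basic facts about Ω
  have hsym : ∀ a c : Fin n, Ω a c = Ω c a := fun a c => hΩ.1.apply c a
  have hrow : ∀ i, ∑ j, Ω i j = 0 := by
    intro i
    have h := congrFun hΩ.2.2.2 i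
    simpa [Matrix.mulVec, dotProduct] using h
  have hcol : ∀ j, ∑ i, Ω i j = 0 := by
    intro j
    rw [Finset.sum_congr rfl (fun i _ => hsym i j)]
    exact hrow j
  have hP0 : ∀ i m, ∑ j, Ω i j * p j m = 0 := by
    intro i m
    have h := congrFun (congrFun hΩ.2.2.1 i) m
    simpa [Matrix.mul_apply, configMatrix] using h
  -- the kernel of Ω is spanned by the columns of P and the all-ones vector
  set v : (Fin r ⊕ Unit) → (Fin n → ℝ) :=
    Sum.elim (fun m => fun i => p i m) (fun _ => fun _ => 1) with hvdef
  have hvind : LinearIndependent ℝ v := by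
    rw [Fintype.linearIndependent_iff]
    intro g hg
    have hei : ∀ i : Fin n, (∑ m, g (Sum.inl m) * p i m) + g (Sum.inr ()) = 0 := by
      intro i
      have h := congrFun hg i
      rw [Finset.sum_apply] at h
      rw [Fintype.sum_sum_type] at h
      simpa [hvdef] using h
    obtain ⟨hu, ht⟩ := AY.affine_functional_zero p hdim _ _ hei
    intro z
    cases z with
    | inl m => exact congrFun hu m
    | inr u => cases u; exact ht
  have hmem : ∀ x : Fin n → ℝ, Ω *ᵥ x = 0 →
      ∃ (u : Fin r → ℝ) (t : ℝ), ∀ i, x i = (∑ m, u m * p i m) + t := by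
    intro x hx
    have hxk : x ∈ LinearMap.ker Ω.mulVecLin := by
      rw [LinearMap.mem_ker, Matrix.mulVecLin_apply]; exact hx
    have hWK : Submodule.span ℝ (Set.range v) = LinearMap.ker Ω.mulVecLin := by
      apply Submodule.eq_of_le_of_finrank_le
      · rw [Submodule.span_le]
        rintro _ ⟨z, rfl⟩
        rw [SetLike.mem_coe, LinearMap.mem_ker, Matrix.mulVecLin_apply]
        cases z with
        | inl m =>
          funext i
          have h := hP0 i m
          simpa [Matrix.mulVec, dotProduct, hvdef] using h
        | inr _ =>
          funext i
          simpa [Matrix.mulVec, dotProduct, hvdef] using hrow i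
      · have h2 := LinearMap.finrank_range_add_finrank_ker Ω.mulVecLin
        have h3 : Module.finrank ℝ (Fin n → ℝ) = n := Module.finrank_fin_fun ℝ
        have h4 : Module.finrank ℝ (LinearMap.range Ω.mulVecLin) = n - r - 1 := hrank
        have h5 : Module.finrank ℝ (Submodule.span ℝ (Set.range v)) = r + 1 := by
          rw [finrank_span_eq_card hvind]; simp
        rw [h5]
        set a := Module.finrank ℝ (LinearMap.range Ω.mulVecLin) with ha
        set c := Module.finrank ℝ (LinearMap.ker Ω.mulVecLin) with hc
        rw [h3] at h2
        omega
    rw [← hWK, Submodule.mem_span_range_iff_exists_fun] at hxk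
    obtain ⟨c, hc⟩ := hxk
    refine ⟨fun m => c (Sum.inl m), c (Sum.inr ()), fun i => ?_⟩
    rw [← hc, Finset.sum_apply, Fintype.sum_sum_type]
    simp [hvdef]
  -- the energy argument: Ω kills every coordinate column of q
  have hnormsq : ∀ (d : ℕ) (x y : EuclideanSpace ℝ (Fin d)),
      ‖x - y‖ ^ 2 = ∑ k, (x k - y k) ^ 2 := by
    intro d x y
    rw [AY.norm_sq_euclidean]
    exact Finset.sum_congr rfl fun k _ => by rw [show (x - y) k = x k - y k from rfl]
  have hTq0 : ∀ k : Fin r', Ω *ᵥ (fun i => q i k) = 0 := by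
    have hDq : ∑ i, ∑ j, Ω i j * (∑ k, (q i k - q j k) ^ 2)
        = ∑ i, ∑ j, Ω i j * (∑ m, (p i m - p j m) ^ 2) := by
      apply Finset.sum_congr rfl; intro i _
      apply Finset.sum_congr rfl; intro j _
      by_cases hij : i = j
      · subst hij; simp
      · by_cases hadj : G.Adj i j
        · have h1 : ∑ k, (q i k - q j k) ^ 2 = ∑ m, (p i m - p j m) ^ 2 := by
            rw [← hnormsq _ (q i) (q j), ← hnormsq _ (p i) (p j), hequiv i j hadj]
          rw [h1]
        · rw [hΩ.2.1 i j hij hadj]; ring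
    have hTp : ∑ i, ∑ j, Ω i j * (∑ m, p i m * p j m) = 0 := by
      apply Finset.sum_eq_zero
      intro i _
      have h : ∀ j, Ω i j * (∑ m, p i m * p j m) = ∑ m, p i m * (Ω i j * p j m) := by
        intro j
        rw [Finset.mul_sum]
        exact Finset.sum_congr rfl fun m _ => by ring
      simp only [h]
      rw [Finset.sum_comm]
      apply Finset.sum_eq_zero
      intro m _
      rw [← Finset.mul_sum, hP0 i m, mul_zero]
    have hq : ∑ i, ∑ j, Ω i j * (∑ k, (q i k - q j k) ^ 2)
        = -2 * ∑ i, ∑ j, Ω i j * (∑ k, q i k * q j k) :=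
      AY.energy_identity Ω hrow hcol (fun i k => q i k)
    have hp : ∑ i, ∑ j, Ω i j * (∑ m, (p i m - p j m) ^ 2)
        = -2 * ∑ i, ∑ j, Ω i j * (∑ m, p i m * p j m) :=
      AY.energy_identity Ω hrow hcol (fun i m => p i m)
    have hTq : ∑ i, ∑ j, Ω i j * (∑ k, q i k * q j k) = 0 := by
      have h := hDq
      rw [hq, hp, hTp, mul_zero] at h
      linarith
    have hswap : ∑ i, ∑ j, Ω i j * (∑ k, q i k * q j k)
        = ∑ k : Fin r', (fun i => q i k) ⬝ᵥ (Ω *ᵥ (fun i => q i k)) :=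
      AY.triple_to_quadform Ω (fun i k => q i k)
    have hnn : ∀ k : Fin r', 0 ≤ (fun i => q i k) ⬝ᵥ (Ω *ᵥ (fun i => q i k)) := by
      intro k
      have h := hpsd.dotProduct_mulVec_nonneg (fun i => q i k)
      simpa using h
    have hz : ∀ k ∈ Finset.univ, (fun i => q i k) ⬝ᵥ (Ω *ᵥ (fun i => q i k)) = 0 := by
      rw [← Finset.sum_eq_zero_iff_of_nonneg (fun k _ => hnn k)]
      rw [← hswap]; exact hTq
    intro k
    exact (hpsd.dotProduct_mulVec_zero_iff (fun i => q i k)).mp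
      (by simpa using hz k (Finset.mem_univ k))
  -- q is an affine image of p
  have hcolsm : ∀ k : Fin r', ∃ (u : Fin r → ℝ) (t : ℝ), ∀ i, q i k = (∑ m, u m * p i m) + t :=
    fun k => hmem _ (hTq0 k)
  choose A b hA using hcolsm
  set Φ : Fin r → Fin r → ℝ :=
    fun m l => (∑ k, A k m * A k l) - (if m = l then 1 else 0) with hΦset
  have hΦdef : ∀ m l, Φ m l = (∑ k, A k m * A k l) - (if m = l then 1 else 0) :=
    fun m l => rfl
  have hΦsym : ∀ m l, Φ l m = Φ m l := by
    intro m l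
    rw [hΦdef, hΦdef]
    have h1 : (∑ k, A k l * A k m) = ∑ k, A k m * A k l :=
      Finset.sum_congr rfl fun k _ => mul_comm _ _
    rw [h1]
    by_cases h : m = l
    · subst h; rfl
    · rw [if_neg (fun hh => h hh.symm), if_neg h]
  have hdiff : ∀ i j, ∑ k, (q i k - q j k) ^ 2
      = (∑ m, (p i m - p j m) ^ 2)
        + ∑ m, ∑ l, (p i m - p j m) * ((p i l - p j l) * Φ m l) :=
    AY.quad_diff p q A b hA Φ hΦdef
  -- the bilinear expression vanishes on edges and the diagonal
  have hEadj : ∀ i j, G.Adj i j →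
      ∑ m, ∑ l, (p i m - p j m) * ((p i l - p j l) * Φ m l) = 0 := by
    intro i j hadj
    have h1 : ∑ k, (q i k - q j k) ^ 2 = ∑ m, (p i m - p j m) ^ 2 := by
      rw [← hnormsq _ (q i) (q j), ← hnormsq _ (p i) (p j), hequiv i j hadj]
    have h2 := hdiff i j
    linarith
  have hEdiag : ∀ i, ∑ m, ∑ l, (p i m - p i m) * ((p i l - p i l) * Φ m l) = 0 := by
    intro i
    apply Finset.sum_eq_zero
    intro m _
    apply Finset.sum_eq_zero
    intro l _
    rw [sub_self, zero_mul]
  -- the quadric values form a vector in the kernel of Ω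
  have hfq : Ω *ᵥ (fun j => ∑ m, ∑ l, p j m * (p j l * Φ m l)) = 0 := by
    funext i
    have h := AY.stress_quadric Ω p Φ hrow hP0 (fun a c hac => by
      by_cases h1 : a = c
      · subst h1; exact hEdiag a
      · by_cases h2 : G.Adj a c
        · exact hEadj a c h2
        · exact absurd (hΩ.2.1 a c h1 h2) hac) i
    simpa [Matrix.mulVec, dotProduct] using h
  obtain ⟨u, t, hut⟩ := hmem _ hfq
  -- every node together with its neighbours gives at least r + 1 points
  have hdeg : ∀ i : Fin n,
      r + 1 ≤ (insert i (Finset.univ.filter (fun j => G.Adj i j))).card := by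
    intro i
    by_contra hcon
    push_neg at hcon
    set N := insert i (Finset.univ.filter (fun j => G.Adj i j)) with hN
    obtain ⟨s, hNs, hscard⟩ := Finset.exists_superset_card_eq
      (show N.card ≤ r + 1 by omega) (by simp only [Fintype.card_fin]; omega)
    have hw0 : (fun j => Ω i j) = 0 := by
      apply AY.weights_zero_of_genpos hgen hscard
      · intro j hj
        have hjN : j ∉ N := fun h => hj (hNs h)
        rw [hN] at hjN
        simp only [Finset.mem_insert, Finset.mem_filter, Finset.mem_univ, true_and] at hjN
        push_neg at hjN
        exact hΩ.2.1 i j (fun h => hjN.1 h.symm) hjN.2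
      · exact hrow i
      · exact hP0 i
    have hsingle : Ω *ᵥ (Pi.single i 1) = 0 := by
      funext j
      have h1 : (Ω *ᵥ (Pi.single i 1)) j = Ω j i := by
        simp only [Matrix.mulVec, dotProduct]
        rw [Finset.sum_eq_single i]
        · simp
        · intro c _ hc; simp [Pi.single_eq_of_ne hc]
        · simp
      rw [h1, ← hsym i j]
      exact congrFun hw0 j
    obtain ⟨u', t', hut'⟩ := hmem _ hsingle
    obtain ⟨s', hs'sub, hs'card⟩ := Finset.exists_subset_card_eq (s := Finset.univ.erase i) (n := r + 1)
      (by rw [Finset.card_erase_of_mem (Finset.mem_univ i)]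
          simp only [Finset.card_univ, Fintype.card_fin]
          omega)
    have h0 : ∀ j ∈ s', (∑ m, u' m * p j m) + t' = 0 := by
      intro j hj
      have hji : j ≠ i := Finset.ne_of_mem_erase (hs'sub hj)
      have h := hut' j
      rw [Pi.single_eq_of_ne hji] at h
      exact h.symm
    obtain ⟨hu', ht'⟩ := AY.vanish_on_genpos hgen hs'card h0
    have h := hut' i
    rw [Pi.single_eq_same, hu', ht'] at h
    simp at h
  -- final congruence argument
  intro i j
  obtain ⟨s, hssub, hscard⟩ := Finset.exists_subset_card_eq
    (s := insert i (Finset.univ.filter (fun j => G.Adj i j))) (n := r + 1) (hdeg i)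
  have hrepr : ∀ jj : Fin n,
      (∑ l, (u l - 2 * ∑ m, p i m * Φ m l) * p jj l)
        + ((∑ m, ∑ l, p i m * (p i l * Φ m l)) + t)
      = ∑ m, ∑ l, (p i m - p jj m) * ((p i l - p jj l) * Φ m l) := by
    intro jj
    have h1 : ∀ m l, (p i m - p jj m) * ((p i l - p jj l) * Φ m l)
        = p i m * (p i l * Φ m l) - p i m * (p jj l * Φ m l)
          - p jj m * (p i l * Φ m l) + p jj m * (p jj l * Φ m l) := by
      intro m l; ring
    have hRHS : ∑ m, ∑ l, (p i m - p jj m) * ((p i l - p jj l) * Φ m l)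
        = (∑ m, ∑ l, p i m * (p i l * Φ m l)) - (∑ m, ∑ l, p i m * (p jj l * Φ m l))
          - (∑ m, ∑ l, p jj m * (p i l * Φ m l)) + (∑ m, ∑ l, p jj m * (p jj l * Φ m l)) := by
      simp only [h1, Finset.sum_add_distrib, Finset.sum_sub_distrib]
    have hXY : ∑ m, ∑ l, p jj m * (p i l * Φ m l) = ∑ m, ∑ l, p i m * (p jj l * Φ m l) := by
      rw [Finset.sum_comm]
      apply Finset.sum_congr rfl; intro m _
      apply Finset.sum_congr rfl; intro l _
      rw [hΦsym m l]
      ring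
    have hX : ∑ m, ∑ l, p i m * (p jj l * Φ m l)
        = ∑ l, (∑ m, p i m * Φ m l) * p jj l := by
      rw [Finset.sum_comm]
      apply Finset.sum_congr rfl; intro l _
      rw [Finset.sum_mul]
      apply Finset.sum_congr rfl; intro m _
      ring
    have hsplitL : ∑ l, (u l - 2 * ∑ m, p i m * Φ m l) * p jj l
        = (∑ l, u l * p jj l) - 2 * ∑ l, (∑ m, p i m * Φ m l) * p jj l := by
      rw [Finset.mul_sum, ← Finset.sum_sub_distrib]
      apply Finset.sum_congr rfl; intro l _; ring
    have hfqv : ∑ m, ∑ l, p jj m * (p jj l * Φ m l) = (∑ m, u m * p jj m) + t := hut jj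
    rw [hRHS, hXY, hX, hsplitL, hfqv]
    ring
  have hvanish : ∀ jj ∈ s, (∑ l, (u l - 2 * ∑ m, p i m * Φ m l) * p jj l)
      + ((∑ m, ∑ l, p i m * (p i l * Φ m l)) + t) = 0 := by
    intro jj hjj
    rw [hrepr jj]
    have hmem' := hssub hjj
    rw [Finset.mem_insert] at hmem'
    rcases hmem' with h | h
    · rw [h]; exact hEdiag i
    · rw [Finset.mem_filter] at h
      exact hEadj i jj h.2
  obtain ⟨hw, hcst⟩ := AY.vanish_on_genpos (u := fun l => u l - 2 * ∑ m, p i m * Φ m l)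
    (t := (∑ m, ∑ l, p i m * (p i l * Φ m l)) + t) hgen hscard hvanish
  have hE0 : ∑ m, ∑ l, (p i m - p j m) * ((p i l - p j l) * Φ m l) = 0 := by
    rw [← hrepr j]
    have h1 : (∑ l, (u l - 2 * ∑ m, p i m * Φ m l) * p j l) = 0 :=
      Finset.sum_eq_zero fun l _ => by
        rw [show u l - 2 * ∑ m, p i m * Φ m l = 0 from congrFun hw l, zero_mul]
    rw [h1, hcst, add_zero]
  have h2 := hdiff i j
  rw [hE0, add_zero] at h2
  have h3 : ‖q i - q j‖ ^ 2 = ‖p i - p j‖ ^ 2 := by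
    rw [hnormsq, hnormsq, h2]
  calc ‖q i - q j‖ = Real.sqrt (‖q i - q j‖ ^ 2) := (Real.sqrt_sq (norm_nonneg _)).symm
    _ = Real.sqrt (‖p i - p j‖ ^ 2) := by rw [h3]
    _ = ‖p i - p j‖ := Real.sqrt_sq (norm_nonneg _)
end

section
/- Let X^T be an (n−r−1)×n real matrix with columns x^1,…,x^n, where 1 ≤ r ≤ n−2, such that every subset of {x^1,…,x^n} of size n−r−1 is linearly independent. Then there exists a vector ξ = (ξ_1,…,ξ_n) ∈ ℝ^n such that X^T ξ = 0 and ξ_i ≠ 0 for every i = 1,…,n. -/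
open Matrix

/-- **Lemma 3.1.** If `Xᵀ` is an `(n-r-1) × n` matrix, `1 ≤ r ≤ n - 2`, whose columns
(the rows `X i` of `X`) have the property that every `n - r - 1` of them are linearly
independent, then there is a vector `ξ ∈ ℝⁿ` with `Xᵀ ξ = 0` and `ξ i ≠ 0` for all `i`. -/
theorem exists_nowhere_zero_null_vector
    (n r : ℕ) (hr : 1 ≤ r) (hrn : r + 2 ≤ n)
    (X : Matrix (Fin n) (Fin (n - r - 1)) ℝ)
    (hgen : ∀ s : Finset (Fin n), s.card = n - r - 1 →
      LinearIndependent ℝ (fun i : s => X i)) :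
    ∃ ξ : Fin n → ℝ, Xᵀ *ᵥ ξ = 0 ∧ ∀ i : Fin n, ξ i ≠ 0 := by
  -- For each i, there is a kernel vector with nonzero i-th coordinate.
  have key : ∀ i : Fin n, ∃ ξ : Fin n → ℝ, Xᵀ *ᵥ ξ = 0 ∧ ξ i ≠ 0 := by
    intro i
    -- pick s ⊆ {i}ᶜ with card m
    have hcard : n - r - 1 ≤ ({i}ᶜ : Finset (Fin n)).card := by
      rw [Finset.card_compl, Finset.card_singleton, Fintype.card_fin]
      omega
    obtain ⟨s, hs_sub, hs_card⟩ := Finset.exists_subset_card_eq hcard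
    have hi : i ∉ s := fun h => by simpa using hs_sub h
    have hli := hgen s hs_card
    have hspan : Submodule.span ℝ (Set.range fun j : s => X j) = ⊤ :=
      hli.span_eq_top_of_card_eq_finrank' (by
        simp [Fintype.card_coe, hs_card, Module.finrank_fintype_fun_eq_card])
    have hmem : X i ∈ Submodule.span ℝ (Set.range fun j : s => X j) := by
      rw [hspan]; trivial
    rw [Submodule.mem_span_range_iff_exists_fun] at hmem
    obtain ⟨c, hc⟩ := hmem
    refine ⟨fun j => if h : j ∈ s then -c ⟨j, h⟩ else if j = i then 1 else 0, ?_, ?_⟩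
    · funext k
      have hck := congrFun hc k
      simp only [Finset.sum_apply, Pi.smul_apply, smul_eq_mul] at hck
      simp only [mulVec, dotProduct, transpose_apply, Pi.zero_apply]
      rw [← Finset.sum_add_sum_compl s]
      have h1 : ∑ j ∈ s, X j k * (if h : j ∈ s then -c ⟨j, h⟩ else if j = i then 1 else 0)
          = -∑ j : s, c j * X (↑j) k := by
        rw [← Finset.sum_attach s (fun j => X j k * (if h : j ∈ s then -c ⟨j, h⟩ else if j = i then 1 else 0)), ← Finset.sum_neg_distrib]
        refine Finset.sum_congr rfl fun j _ => ?_
        rw [dif_pos j.2]; ring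
      have h2 : ∑ j ∈ sᶜ, X j k * (if h : j ∈ s then -c ⟨j, h⟩ else if j = i then 1 else 0)
          = X i k := by
        rw [Finset.sum_eq_single i]
        · rw [dif_neg hi, if_pos rfl, mul_one]
        · intro b hb hbi
          rw [dif_neg (Finset.mem_compl.mp hb), if_neg hbi, mul_zero]
        · intro h; exact absurd (Finset.mem_compl.mpr hi) h
      rw [h1, h2, hck]
      ring
    · simp [hi]
  -- now use that ℝⁿ's kernel is not a finite union of proper subspaces
  set K := LinearMap.ker (Xᵀ).mulVecLin with hK
  have hne : ∀ i : Fin n, LinearMap.ker ((LinearMap.proj i).comp K.subtype) ≠ ⊤ := by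
    intro i htop
    obtain ⟨ξ, hξ, hξi⟩ := key i
    have hmem : ξ ∈ K := by rw [hK, LinearMap.mem_ker, mulVecLin_apply]; exact hξ
    have : (⟨ξ, hmem⟩ : K) ∈ LinearMap.ker ((LinearMap.proj i).comp K.subtype) := by
      rw [htop]; trivial
    exact hξi this
  by_contra hcon
  have hcover : ⋃ i : Fin n,
      ((LinearMap.ker ((LinearMap.proj i).comp K.subtype) : Submodule ℝ K) : Set K)
      = Set.univ := by
    ext v
    simp only [Set.mem_iUnion, Set.mem_univ, iff_true, SetLike.mem_coe, LinearMap.mem_ker,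
      LinearMap.comp_apply, LinearMap.proj_apply, Submodule.subtype_apply]
    by_contra hv
    push_neg at hv
    refine hcon ⟨(v : Fin n → ℝ), ?_, hv⟩
    exact v.2
  obtain ⟨i, hi⟩ := Subspace.exists_eq_top_of_iUnion_eq_univ hcover
  exact hne i hi
end

section
/- Let X^T be an (n−r−1)×n real matrix with columns x^1,…,x^n, 1 ≤ r ≤ n−2, such that every subset of {x^1,…,x^n} of size n−r−1 is linearly independent, and let ξ ∈ ℝ^n satisfy X^T ξ = 0 with ξ_i ≠ 0 for all i. Set Z = Diag(ξ) X, where Diag(ξ) is the diagonal matrix with diagonal ξ. Let P be an n×r matrix whose columns form a basis of the null space of the matrix obtained by stacking Z^T on top of e^T (e the all-ones vector in ℝ^n), and let p be the configuration in ℝ^r whose configuration matrix is P. Then p is an r-dimensional configuration in general position in ℝ^r and Z is a Gale matrix of p. -/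
open Matrix

private lemma dot_all_zero {m : ℕ} {ι : Type*} (v : ι → (Fin m → ℝ))
    (hspan : Submodule.span ℝ (Set.range v) = ⊤) (g : Fin m → ℝ)
    (hg : ∀ i, v i ⬝ᵥ g = 0) : g = 0 := by
  have hall : ∀ w : Fin m → ℝ, w ⬝ᵥ g = 0 := by
    intro w
    have hw : w ∈ Submodule.span ℝ (Set.range v) := by rw [hspan]; trivial
    induction hw using Submodule.span_induction with
    | mem x hx => obtain ⟨i, rfl⟩ := hx; exact hg i
    | zero => simp
    | add x y _ _ hx hy => simp [add_dotProduct, hx, hy]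
    | smul c x _ hx => simp [smul_dotProduct, hx]
  exact dotProduct_self_eq_zero.mp (hall g)


/-- **Lemma 3.2.** Let `X` be such that every `n - r - 1` rows are linearly independent,
`1 ≤ r ≤ n - 2`, let `ξ` satisfy `Xᵀ ξ = 0` with all entries nonzero, and set
`Z = Diag(ξ) X`. If `P` is an `n × r` matrix whose columns form a basis of the null space of
the matrix `[Zᵀ; eᵀ]`, and `p` is the configuration with configuration matrix `P`, then `p` is
an `r`-dimensional configuration in general position in `ℝ^r` and `Z` is a Gale matrix of `p`. -/
theorem general_position_configuration_from_orthogonal_representation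
    (n r : ℕ) (hr : 1 ≤ r) (hrn : r + 2 ≤ n)
    (X : Matrix (Fin n) (Fin (n - r - 1)) ℝ)
    (hgen : ∀ s : Finset (Fin n), s.card = n - r - 1 →
      LinearIndependent ℝ (fun i : s => X i))
    (ξ : Fin n → ℝ) (hξ0 : Xᵀ *ᵥ ξ = 0) (hξ : ∀ i : Fin n, ξ i ≠ 0)
    (Z : Matrix (Fin n) (Fin (n - r - 1)) ℝ) (hZ : Z = Matrix.diagonal ξ * X)
    (P : Matrix (Fin n) (Fin r) ℝ)
    (hPindep : LinearIndependent ℝ (fun k : Fin r => fun i => P i k))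
    (hPspan : Submodule.span ℝ (Set.range (fun k : Fin r => fun i => P i k)) =
      LinearMap.ker
        (Matrix.fromRows Zᵀ (Matrix.of fun (_ : Unit) (_ : Fin n) => (1 : ℝ))).mulVecLin)
    (p : Fin n → EuclideanSpace ℝ (Fin r)) (hp : ∀ i k, p i k = P i k) :
    IsRDimensional p ∧ InGeneralPosition p ∧ IsGaleMatrix p Z := by
  
  classical
  have hrowsX : ∀ s : Finset (Fin n), s.card = n - r - 1 → ∀ g : Fin (n - r - 1) → ℝ,
      (∀ i ∈ s, X i ⬝ᵥ g = 0) → g = 0 := by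
    intro s hs g hg
    have hcard : Fintype.card s = Module.finrank ℝ (Fin (n - r - 1) → ℝ) := by
      simp [Fintype.card_coe, hs, Module.finrank_pi]
    have hspan := (hgen s hs).span_eq_top_of_card_eq_finrank' hcard
    exact dot_all_zero _ hspan g (fun i => hg i i.2)
  have hXker : ∀ g : Fin (n - r - 1) → ℝ, X *ᵥ g = 0 → g = 0 := by
    intro g hg
    obtain ⟨s, -, hs⟩ := Finset.exists_subset_card_eq
      (s := (Finset.univ : Finset (Fin n))) (n := n - r - 1) (by simp; omega)
    exact hrowsX s hs g (fun i _ => congrFun hg i)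
  have hZij : ∀ i j, Z i j = ξ i * X i j := by
    intro i j; rw [hZ]; simp [Matrix.diagonal_mul]
  have hZe : ∀ j, ∑ i, Z i j = 0 := by
    intro j
    have h := congrFun hξ0 j
    simp only [Matrix.mulVec, dotProduct, Matrix.transpose_apply, Pi.zero_apply] at h
    rw [← h]
    exact Finset.sum_congr rfl fun i _ => by rw [hZij]; ring
  have hZcol : LinearIndependent ℝ (fun j : Fin (n - r - 1) => fun i => Z i j) := by
    rw [Fintype.linearIndependent_iff]
    intro g hg
    have hXg : X *ᵥ g = 0 := by
      funext i
      have h1 : ∑ j, g j * Z i j = 0 := by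
        have := congrFun hg i
        simpa using this
      have h2 : ξ i * (∑ j, X i j * g j) = 0 := by
        rw [Finset.mul_sum, ← h1]
        exact Finset.sum_congr rfl fun j _ => by rw [hZij]; ring
      have h3 := (mul_eq_zero.mp h2).resolve_left (hξ i)
      simpa [Matrix.mulVec, dotProduct] using h3
    have h0 := hXker g hXg
    intro j; rw [h0]; rfl
  have hcolP : ∀ k : Fin r,
      (Matrix.fromRows Zᵀ (Matrix.of fun (_ : Unit) (_ : Fin n) => (1 : ℝ))).mulVecLin
        (fun i => P i k) = 0 := by
    intro k
    have h : (fun i => P i k) ∈ LinearMap.ker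
        (Matrix.fromRows Zᵀ (Matrix.of fun (_ : Unit) (_ : Fin n) => (1 : ℝ))).mulVecLin := by
      rw [← hPspan]; exact Submodule.subset_span ⟨k, rfl⟩
    exact h
  have hZP : ∀ (k : Fin r) (j : Fin (n - r - 1)), ∑ i, Z i j * P i k = 0 := by
    intro k j
    have := congrFun (hcolP k) (Sum.inl j)
    simpa [Matrix.mulVecLin_apply, Matrix.fromRows_mulVec, Matrix.mulVec, dotProduct,
      Matrix.transpose_apply] using this
  have heP : ∀ k : Fin r, ∑ i, P i k = 0 := by
    intro k
    have := congrFun (hcolP k) (Sum.inr ())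
    simpa [Matrix.mulVecLin_apply, Matrix.fromRows_mulVec, Matrix.mulVec,
      dotProduct] using this
  have hPrank : P.rank = r := by
    rw [Matrix.rank_eq_finrank_span_cols]
    rw [show (Set.range P.col) = Set.range (fun k : Fin r => fun i => P i k) from rfl]
    rw [finrank_span_eq_card hPindep]
    simp
  have hProwspan : Submodule.span ℝ (Set.range (fun i : Fin n => fun k : Fin r => P i k)) = ⊤ := by
    have h1 : Pᵀ.rank = r := by rw [Matrix.rank_transpose]; exact hPrank
    rw [Matrix.rank_eq_finrank_span_cols] at h1
    apply Submodule.eq_top_of_finrank_eq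
    rw [show Set.range (fun i : Fin n => fun k : Fin r => P i k) = Set.range Pᵀ.col from rfl]
    rw [h1, Module.finrank_pi]
    simp
  have hdual : ∀ a : Fin r → ℝ, (∀ i, ∑ k, P i k * a k = 0) → a = 0 := by
    intro a ha
    exact dot_all_zero _ hProwspan a (fun i => ha i)
  have hAapp1 : ∀ (k : Fin r) (i : Fin n), galeStack p (Sum.inl k) i = P i k := by
    intro k i; simp [galeStack, hp]
  have hAapp2 : ∀ (u : Unit) (i : Fin n), galeStack p (Sum.inr u) i = 1 := by
    intro u i; simp [galeStack]
  have hAker : LinearMap.ker (galeStack p)ᵀ.mulVecLin = ⊥ := by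
    rw [LinearMap.ker_eq_bot']
    intro y hy
    have hyi : ∀ i : Fin n, (∑ k, P i k * y (Sum.inl k)) + y (Sum.inr ()) = 0 := by
      intro i
      have h := congrFun hy i
      simp only [Matrix.mulVecLin_apply, Matrix.mulVec, dotProduct,
        Matrix.transpose_apply, Fintype.sum_sum_type, Finset.univ_unique,
        Finset.sum_singleton, Pi.zero_apply] at h
      rw [← h]
      congr 1
      · exact Finset.sum_congr rfl fun k _ => by rw [hAapp1]
      · rw [hAapp2]; ring
    have hc : y (Sum.inr ()) = 0 := by
      have hsum : ∑ i : Fin n, ((∑ k, P i k * y (Sum.inl k)) + y (Sum.inr ())) = 0 := by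
        simp [hyi]
      rw [Finset.sum_add_distrib, Finset.sum_comm] at hsum
      have h1 : ∑ k, ∑ i, P i k * y (Sum.inl k) = 0 := by
        apply Finset.sum_eq_zero
        intro k _
        rw [← Finset.sum_mul, heP k, zero_mul]
      rw [h1, zero_add, Finset.sum_const, Finset.card_univ, Fintype.card_fin,
        nsmul_eq_mul] at hsum
      have hn0 : (n : ℝ) ≠ 0 := Nat.cast_ne_zero.mpr (by omega)
      exact (mul_eq_zero.mp hsum).resolve_left hn0
    have ha : (fun k => y (Sum.inl k)) = 0 := by
      apply hdual
      intro i
      have h2 := hyi i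
      rw [hc, add_zero] at h2
      exact h2
    funext x
    cases x with
    | inl k => exact congrFun ha k
    | inr u => cases u; exact hc
  have hfinrk : Module.finrank ℝ (LinearMap.ker (galeStack p).mulVecLin) = n - r - 1 := by
    have h1 := LinearMap.finrank_range_add_finrank_ker ((galeStack p)ᵀ.mulVecLin)
    rw [hAker, finrank_bot, add_zero, Module.finrank_pi] at h1
    have h2 : (galeStack p).rank = r + 1 := by
      rw [← Matrix.rank_transpose]
      show Module.finrank ℝ (LinearMap.range (galeStack p)ᵀ.mulVecLin) = r + 1
      rw [h1]; simp
    have h2' : Module.finrank ℝ (LinearMap.range (galeStack p).mulVecLin) = r + 1 := h2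
    have h3 := LinearMap.finrank_range_add_finrank_ker ((galeStack p).mulVecLin)
    rw [h2', Module.finrank_pi, Fintype.card_fin] at h3
    omega
  have hZcolker : ∀ j, (fun i => Z i j) ∈ LinearMap.ker (galeStack p).mulVecLin := by
    intro j
    rw [LinearMap.mem_ker]
    funext x
    cases x with
    | inl k =>
      show ∑ i, galeStack p (Sum.inl k) i * Z i j = 0
      rw [← hZP k j]
      exact Finset.sum_congr rfl fun i _ => by rw [hAapp1]; ring
    | inr u =>
      show ∑ i, galeStack p (Sum.inr u) i * Z i j = 0
      rw [← hZe j]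
      exact Finset.sum_congr rfl fun i _ => by rw [hAapp2]; ring
  have hgale : Submodule.span ℝ (Set.range (fun j : Fin (n - r - 1) => fun i => Z i j)) =
      LinearMap.ker (galeStack p).mulVecLin := by
    apply Submodule.eq_of_le_of_finrank_le
    · rw [Submodule.span_le]
      rintro _ ⟨j, rfl⟩
      exact hZcolker j
    · rw [hfinrk, finrank_span_eq_card hZcol, Fintype.card_fin]
  have hgp : InGeneralPosition p := by
    intro s hs
    rw [affineIndependent_iff]
    intro t w hw hwp
    set w' : ↥s → ℝ := fun i => if i ∈ t then w i else 0 with hw'def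
    set lam : Fin n → ℝ := fun i => if h : i ∈ s then w' ⟨i, h⟩ else 0 with hlamdef
    have hlam_eq : ∀ (i : Fin n) (h : i ∈ s), lam i = w' ⟨i, h⟩ := by
      intro i h; simp [hlamdef, h]
    have hlam0 : ∀ i : Fin n, i ∉ s → lam i = 0 := by
      intro i h; simp [hlamdef, h]
    have hsum_lam : ∀ f : Fin n → ℝ, (∑ i, lam i * f i) = ∑ i : s, w' i * f ↑i := by
      intro f
      rw [← Finset.sum_subset (Finset.subset_univ s)
        (fun i _ hi => by rw [hlam0 i hi, zero_mul])]
      rw [← Finset.sum_attach s (fun i => lam i * f i), Finset.univ_eq_attach]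
      exact Finset.sum_congr rfl fun i _ => by rw [hlam_eq ↑i i.2]
    have hw'sum : ∑ i : s, w' i = 0 := by
      simp only [hw'def]
      rw [Finset.sum_ite_mem, Finset.univ_inter]
      exact hw
    have hw'P : ∀ k : Fin r, ∑ i : s, w' i * P ↑i k = 0 := by
      intro k
      have h := congrArg (EuclideanSpace.proj k) hwp
      simp only [map_sum, _root_.map_smul, PiLp.proj_apply, smul_eq_mul, map_zero] at h
      simp only [hw'def, ite_mul, zero_mul]
      rw [Finset.sum_ite_mem, Finset.univ_inter]
      rw [← h]
      exact Finset.sum_congr rfl fun i _ => by rw [hp]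
    have hlamker : lam ∈ LinearMap.ker (galeStack p).mulVecLin := by
      rw [LinearMap.mem_ker]
      funext x
      cases x with
      | inl k =>
        show ∑ i, galeStack p (Sum.inl k) i * lam i = 0
        have h1 : ∑ i, galeStack p (Sum.inl k) i * lam i = ∑ i, lam i * P i k :=
          Finset.sum_congr rfl fun i _ => by rw [hAapp1]; ring
        rw [h1, hsum_lam (fun i => P i k)]
        exact hw'P k
      | inr u =>
        show ∑ i, galeStack p (Sum.inr u) i * lam i = 0
        have h1 : ∑ i, galeStack p (Sum.inr u) i * lam i = ∑ i, lam i * 1 :=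
          Finset.sum_congr rfl fun i _ => by rw [hAapp2]; ring
        rw [h1, hsum_lam (fun _ => 1)]
        simpa using hw'sum
    have hlamspan : lam ∈ Submodule.span ℝ
        (Set.range (fun j : Fin (n - r - 1) => fun i => Z i j)) := by
      rw [hgale]; exact hlamker
    have hlamrange : lam ∈ LinearMap.range Z.mulVecLin := by
      rw [Matrix.range_mulVecLin]
      exact hlamspan
    obtain ⟨μ, hμ⟩ := hlamrange
    rw [Matrix.mulVecLin_apply] at hμ
    have hXμ : ∀ i ∈ sᶜ, X i ⬝ᵥ μ = 0 := by
      intro i hi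
      have h0 : lam i = 0 := hlam0 i (Finset.mem_compl.mp hi)
      have h1 : ξ i * (X i ⬝ᵥ μ) = 0 := by
        have h2 : (Z *ᵥ μ) i = 0 := by rw [hμ]; exact h0
        rw [← h2]
        show ξ i * (∑ j, X i j * μ j) = ∑ j, Z i j * μ j
        rw [Finset.mul_sum]
        exact Finset.sum_congr rfl fun j _ => by rw [hZij]; ring
      exact (mul_eq_zero.mp h1).resolve_left (hξ i)
    have hμ0 : μ = 0 := hrowsX sᶜ
      (by rw [Finset.card_compl, hs, Fintype.card_fin]; omega) μ hXμ
    have hlamz : lam = 0 := by rw [← hμ, hμ0, Matrix.mulVec_zero]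
    intro e he
    have h3 : lam ↑e = 0 := congrFun hlamz ↑e
    rw [hlam_eq ↑e e.2] at h3
    simpa [hw'def, he] using h3
  have hrd : IsRDimensional p := by
    obtain ⟨s, -, hs⟩ := Finset.exists_subset_card_eq
      (s := (Finset.univ : Finset (Fin n))) (n := r + 1) (by simp; omega)
    have hai := hgp s hs
    have hcard : Fintype.card s = Module.finrank ℝ (EuclideanSpace ℝ (Fin r)) + 1 := by
      simp [Fintype.card_coe, hs, finrank_euclideanSpace_fin]
    have hvs := hai.vectorSpan_eq_top_of_card_eq_finrank_add_one hcard
    have hmono : vectorSpan ℝ (Set.range (fun i : s => p ↑i)) ≤ vectorSpan ℝ (Set.range p) :=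
      vectorSpan_mono ℝ (by rintro _ ⟨i, rfl⟩; exact ⟨↑i, rfl⟩)
    have hvtop : vectorSpan ℝ (Set.range p) = ⊤ := top_le_iff.mp (hvs ▸ hmono)
    have hne : (Set.range p).Nonempty := ⟨p ⟨0, by omega⟩, Set.mem_range_self _⟩
    exact (AffineSubspace.affineSpan_eq_top_iff_vectorSpan_eq_top_of_nonempty ℝ _ _ hne).mpr hvtop
  exact ⟨hrd, hgp, hZcol, hgale⟩
end
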